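/- Let T, C be nonnegative integrable random variables and for β > 0 define h_β(T,C) = max{C, β − T} and Y_β = T + C + h_β(T,C). Then the map β ↦ E[Y_β] − E[Y_β²]/(2β) is continuous and strictly increasing on (0, ∞) wherever the expectations are finite, and it is negative as β → 0⁺ and positive for sufficiently large β; hence the fixed-point equation E[Y_β] = E[Y_β²]/(2β) has a unique solution β* > 0. -/

import Mathlib

open MeasureTheory

private lemma pt_key (c : ℝ) {x : ℝ} (hx : 0 < x) :
    (c + x) - (c + x)^2 / (2*x) = x/2 - c^2/(2*x) := by
  field_simp; ring

private lemma pt_case1 (c s : ℝ) (hc : 0 ≤ c) {a b : ℝ} (ha : 0 < a) (hab : a < b) (hbs : b ≤ s) :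
    (c + max s a) - (c + max s a)^2 / (2*a) < (c + max s b) - (c + max s b)^2 / (2*b) := by
  rw [max_eq_left (le_trans hab.le hbs), max_eq_left hbs]
  have hs : 0 < c + s := by linarith
  have hX2 : 0 < (c + s)^2 := pow_pos hs 2
  have := div_lt_div_of_pos_left hX2 (by linarith : (0:ℝ) < 2*a) (by linarith : 2*a < 2*b)
  linarith

private lemma pt_case2 (c s : ℝ) (hc : 0 ≤ c) {a b : ℝ} (ha : 0 < a) (hab : a < b) (hsa : s ≤ a) :
    (c + max s a) - (c + max s a)^2 / (2*a) < (c + max s b) - (c + max s b)^2 / (2*b) := by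
  have hb : 0 < b := ha.trans hab
  rw [max_eq_right hsa, max_eq_right (hsa.trans hab.le), pt_key c ha, pt_key c hb]
  have h1 : c^2/(2*b) ≤ c^2/(2*a) := by gcongr <;> linarith
  linarith

private lemma pt_mono (c s : ℝ) (hc : 0 ≤ c) {a b : ℝ} (ha : 0 < a) (hab : a < b) :
    (c + max s a) - (c + max s a)^2 / (2*a) < (c + max s b) - (c + max s b)^2 / (2*b) := by
  rcases le_or_gt b s with hbs | hsb
  · exact pt_case1 c s hc ha hab hbs
  · rcases le_or_gt s a with hsa | has
    · exact pt_case2 c s hc ha hab hsa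
    · exact (pt_case1 c s hc ha has le_rfl).trans (pt_case2 c s hc (ha.trans has) hsb le_rfl)

/-- Characterization of the optimal long-wait threshold `β*`. With
`Y_β = T + C + max{C, β − T}` and
`F(β) = E[Y_β] − E[Y_β²]/(2β)`, the map `F` is continuous and strictly
increasing on `(0, ∞)`, negative near `0⁺`, positive for large `β`; hence the
equation `E[Y_β] = E[Y_β²]/(2β)` has a unique solution `β* > 0`. -/
theorem optimal_threshold_exists_unique
    {Ω : Type*} [MeasureSpace Ω] (μ : Measure Ω) [IsProbabilityMeasure μ]
    (T C : Ω → ℝ)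
    (hT0 : ∀ ω, 0 ≤ T ω) (hC0 : ∀ ω, 0 ≤ C ω)
    (hTint : Integrable T μ) (hCint : Integrable C μ)
    (hTpos : 0 < ∫ ω, T ω ∂μ) (hCpos : 0 < ∫ ω, C ω ∂μ)
    (hsq : Integrable (fun ω => (T ω + C ω) ^ 2) μ)
    (Y : ℝ → Ω → ℝ)
    (hY : ∀ β ω, Y β ω = T ω + C ω + max (C ω) (β - T ω))
    (hYint : ∀ β > 0, Integrable (Y β) μ)
    (hY2int : ∀ β > 0, Integrable (fun ω => (Y β ω) ^ 2) μ)
    (F : ℝ → ℝ)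
    (hF : ∀ β, F β = (∫ ω, Y β ω ∂μ) - (∫ ω, (Y β ω) ^ 2 ∂μ) / (2 * β)) :
    ContinuousOn F (Set.Ioi 0) ∧
    StrictMonoOn F (Set.Ioi 0) ∧
    (∃ ε > 0, ∀ β : ℝ, 0 < β → β < ε → F β < 0) ∧
    (∃ M : ℝ, ∀ β : ℝ, M < β → 0 < F β) ∧
    (∃! βstar : ℝ, 0 < βstar ∧ F βstar = 0) := by
  -- rewrite Y in the convenient form  Y β ω = C ω + max (T ω + C ω) β
  have hYeq : ∀ β ω, Y β ω = C ω + max (T ω + C ω) β := by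
    intro β ω
    rw [hY]
    have h : max (T ω + C ω) (T ω + (β - T ω)) = T ω + max (C ω) (β - T ω) :=
      max_add_add_left _ _ _
    have h2 : T ω + (β - T ω) = β := by ring
    rw [h2] at h
    linarith
  have hY0 : ∀ β, 0 < β → ∀ ω, 0 ≤ Y β ω := by
    intro β hβ ω
    rw [hYeq]
    have : (0:ℝ) ≤ max (T ω + C ω) β := le_trans hβ.le (le_max_right _ _)
    linarith [hC0 ω]
  have hYub_pt : ∀ β, 0 < β → ∀ ω, Y β ω ≤ C ω + (T ω + C ω) + β := by
    intro β hβ ω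
    rw [hYeq]
    have : max (T ω + C ω) β ≤ (T ω + C ω) + β :=
      max_le (by linarith [hT0 ω, hC0 ω]) (by linarith [hT0 ω, hC0 ω])
    linarith
  -- alternative form of F
  have hFalt : ∀ β, 0 < β → F β = ∫ ω, (Y β ω - (Y β ω)^2/(2*β)) ∂μ := by
    intro β hβ
    rw [hF, integral_sub (hYint β hβ) ((hY2int β hβ).div_const (2*β)), integral_div]
  -- strict monotonicity
  have hmono : StrictMonoOn F (Set.Ioi 0) := by
    intro a ha b hb hab
    simp only [Set.mem_Ioi] at ha hb
    have hint : ∀ β, 0 < β → Integrable (fun ω => Y β ω - (Y β ω)^2/(2*β)) μ :=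
      fun β h => (hYint β h).sub ((hY2int β h).div_const _)
    have key : ∀ ω, (Y a ω - (Y a ω)^2/(2*a)) < (Y b ω - (Y b ω)^2/(2*b)) := by
      intro ω
      rw [hYeq a ω, hYeq b ω]
      exact pt_mono _ _ (hC0 ω) ha hab
    have hdiff : Integrable
        (fun ω => (Y b ω - (Y b ω)^2/(2*b)) - (Y a ω - (Y a ω)^2/(2*a))) μ :=
      (hint b hb).sub (hint a ha)
    have hpos : 0 < ∫ ω, ((Y b ω - (Y b ω)^2/(2*b)) - (Y a ω - (Y a ω)^2/(2*a))) ∂μ := by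
      rw [integral_pos_iff_support_of_nonneg_ae
        (Filter.Eventually.of_forall fun ω => sub_nonneg.2 (key ω).le) hdiff]
      have hsupp : Function.support
          (fun ω => (Y b ω - (Y b ω)^2/(2*b)) - (Y a ω - (Y a ω)^2/(2*a))) = Set.univ :=
        Set.eq_univ_of_forall fun ω => ne_of_gt (sub_pos.2 (key ω))
      rw [hsupp]
      simp
    rw [integral_sub (hint b hb) (hint a ha)] at hpos
    rw [hFalt a ha, hFalt b hb]
    linarith
  -- continuity
  have hG1 : ∀ β0 ∈ Set.Ioi (0:ℝ), ContinuousAt (fun β => ∫ ω, Y β ω ∂μ) β0 := by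
    intro β0 hβ0
    simp only [Set.mem_Ioi] at hβ0
    have hnb : ∀ᶠ β in nhds β0, β ∈ Set.Ioo (β0/2) (2*β0) :=
      Ioo_mem_nhds (by linarith) (by linarith)
    apply continuousAt_of_dominated
      (bound := fun ω => C ω + (T ω + C ω) + 2*β0)
    · filter_upwards [hnb] with β hβ
      exact (hYint β (lt_trans (by linarith) hβ.1)).aestronglyMeasurable
    · filter_upwards [hnb] with β hβ
      apply Filter.Eventually.of_forall
      intro ω
      have hβp : 0 < β := lt_trans (by linarith) hβ.1
      rw [Real.norm_eq_abs, abs_of_nonneg (hY0 β hβp ω)]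
      have := hYub_pt β hβp ω
      linarith [hβ.2]
    · exact (hCint.add (hTint.add hCint)).add (integrable_const _)
    · apply Filter.Eventually.of_forall
      intro ω
      have : (fun β => Y β ω) = fun β => C ω + max (T ω + C ω) β := by
        funext β; exact hYeq β ω
      rw [this]
      exact (continuous_const.add (continuous_const.max continuous_id)).continuousAt
  have hG2 : ∀ β0 ∈ Set.Ioi (0:ℝ), ContinuousAt (fun β => ∫ ω, (Y β ω)^2 ∂μ) β0 := by
    intro β0 hβ0
    simp only [Set.mem_Ioi] at hβ0
    have hnb : ∀ᶠ β in nhds β0, β ∈ Set.Ioo (β0/2) (2*β0) :=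
      Ioo_mem_nhds (by linarith) (by linarith)
    apply continuousAt_of_dominated
      (bound := fun ω => 8*(T ω + C ω)^2 + 8*β0^2)
    · filter_upwards [hnb] with β hβ
      exact (hY2int β (lt_trans (by linarith) hβ.1)).aestronglyMeasurable
    · filter_upwards [hnb] with β hβ
      apply Filter.Eventually.of_forall
      intro ω
      have hβp : 0 < β := lt_trans (by linarith) hβ.1
      have h0 : 0 ≤ Y β ω := hY0 β hβp ω
      have h1 : Y β ω ≤ 2*(T ω + C ω) + 2*β0 := by
        have := hYub_pt β hβp ω
        have hh := hT0 ω; have hc := hC0 ω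
        linarith [hβ.2]
      rw [Real.norm_eq_abs, abs_of_nonneg (sq_nonneg _)]
      nlinarith [sq_nonneg (T ω + C ω - β0), sq_nonneg (T ω + C ω), hβ0]
    · exact (hsq.const_mul 8).add (integrable_const _)
    · apply Filter.Eventually.of_forall
      intro ω
      have : (fun β => (Y β ω)^2) = fun β => (C ω + max (T ω + C ω) β)^2 := by
        funext β; rw [hYeq]
      rw [this]
      exact ((continuous_const.add (continuous_const.max continuous_id)).pow 2).continuousAt
  have hcont : ContinuousOn F (Set.Ioi (0:ℝ)) := by
    have hc2 : ContinuousOn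
        (fun β => (∫ ω, Y β ω ∂μ) - (∫ ω, (Y β ω)^2 ∂μ)/(2*β)) (Set.Ioi 0) := by
      apply ContinuousOn.sub
      · exact fun β hβ => (hG1 β hβ).continuousWithinAt
      · apply ContinuousOn.div
        · exact fun β hβ => (hG2 β hβ).continuousWithinAt
        · exact (continuous_const.mul continuous_id).continuousOn
        · intro β hβ
          simp only [Set.mem_Ioi] at hβ
          positivity
    exact hc2.congr fun β _ => hF β
  -- integrability of C^2 and its positivity
  have hC2int : Integrable (fun ω => (C ω)^2) μ := by
    apply Integrable.mono' hsq
    · exact (hCint.aestronglyMeasurable.mul hCint.aestronglyMeasurable).congr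
        (Filter.Eventually.of_forall fun ω => (sq (C ω)).symm)
    · apply Filter.Eventually.of_forall
      intro ω
      rw [Real.norm_eq_abs, abs_of_nonneg (sq_nonneg _)]
      nlinarith [hT0 ω, hC0 ω]
  have hA : 0 < ∫ ω, (C ω)^2 ∂μ := by
    set m : ℝ := ∫ ω, C ω ∂μ with hm
    have h1 : ∫ ω, ((2*m) * C ω - m^2) ∂μ ≤ ∫ ω, (C ω)^2 ∂μ := by
      apply integral_mono ?_ hC2int ?_
      · exact (hCint.const_mul (2*m)).sub (integrable_const _)
      · intro ω
        simp only [Pi.sub_apply]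
        nlinarith [sq_nonneg (C ω - m)]
    rw [integral_sub (hCint.const_mul (2*m)) (integrable_const _), integral_const_mul,
      integral_const] at h1
    simp only [measure_univ, probReal_univ, ENNReal.toReal_one, one_smul, smul_eq_mul] at h1
    nlinarith [hCpos]
  have hY2lb : ∀ β, 0 < β → ∫ ω, (C ω)^2 ∂μ ≤ ∫ ω, (Y β ω)^2 ∂μ := by
    intro β hβ
    apply integral_mono hC2int (hY2int β hβ)
    intro ω
    dsimp only
    have h0 : C ω ≤ Y β ω := by
      rw [hYeq]
      have : (0:ℝ) ≤ max (T ω + C ω) β := le_trans hβ.le (le_max_right _ _)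
      linarith
    nlinarith [hC0 ω]
  -- negativity near 0
  have hneg : ∃ ε > 0, ∀ β : ℝ, 0 < β → β < ε → F β < 0 := by
    set K : ℝ := ∫ ω, (C ω + (T ω + C ω)) ∂μ with hK
    have hK0 : 0 ≤ K :=
      integral_nonneg fun ω => by simp only [Pi.zero_apply]; linarith [hT0 ω, hC0 ω]
    have hKint : Integrable (fun ω => C ω + (T ω + C ω)) μ := hCint.add (hTint.add hCint)
    set A : ℝ := ∫ ω, (C ω)^2 ∂μ with hAdef
    refine ⟨min 1 (A/(2*(K+1))), lt_min one_pos (by positivity), ?_⟩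
    intro β hβ hβε
    have hβ1 : β < 1 := lt_of_lt_of_le hβε (min_le_left _ _)
    have hβ2 : β < A/(2*(K+1)) := lt_of_lt_of_le hβε (min_le_right _ _)
    have hYb : ∫ ω, Y β ω ∂μ ≤ K + β := by
      have h1 : ∫ ω, Y β ω ∂μ ≤ ∫ ω, ((C ω + (T ω + C ω)) + β) ∂μ := by
        apply integral_mono (hYint β hβ) ?_ ?_
        · exact hKint.add (integrable_const β)
        · intro ω
          dsimp only
          linarith [hYub_pt β hβ ω]
      rwa [integral_add hKint (integrable_const β), integral_const,
        probReal_univ, one_smul] at h1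
    have hdivlb : K + 1 < A/(2*β) := by
      rw [lt_div_iff₀ (by linarith : (0:ℝ) < 2*β)]
      rw [lt_div_iff₀ (by positivity : (0:ℝ) < 2*(K+1))] at hβ2
      nlinarith
    have hquot : A/(2*β) ≤ (∫ ω, (Y β ω)^2 ∂μ)/(2*β) :=
      (div_le_div_iff_of_pos_right (by linarith : (0:ℝ) < 2*β)).2 (hY2lb β hβ)
    rw [hF]
    linarith
  -- positivity for large β
  have hQ : 0 < ∫ ω, (T ω + C ω)^2 ∂μ := by
    refine lt_of_lt_of_le hA (integral_mono hC2int hsq fun ω => ?_)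
    dsimp only
    nlinarith [hT0 ω, hC0 ω]
  have hposF : ∃ M : ℝ, ∀ β : ℝ, M < β → 0 < F β := by
    set Q : ℝ := ∫ ω, (T ω + C ω)^2 ∂μ with hQdef
    set EC : ℝ := ∫ ω, C ω ∂μ with hECdef
    refine ⟨max 1 (4*Q/EC), ?_⟩
    intro β hβM
    have hβ1 : 1 < β := lt_of_le_of_lt (le_max_left _ _) hβM
    have hβ : 0 < β := by linarith
    have hβQ : 4*Q/EC < β := lt_of_le_of_lt (le_max_right _ _) hβM
    have hY2ub : ∫ ω, (Y β ω)^2 ∂μ ≤ 8*Q + 2*β^2 := by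
      have h1 : ∫ ω, (Y β ω)^2 ∂μ ≤ ∫ ω, (8*(T ω + C ω)^2 + 2*β^2) ∂μ := by
        apply integral_mono (hY2int β hβ) ?_ ?_
        · exact (hsq.const_mul 8).add (integrable_const (2*β^2))
        · intro ω
          dsimp only
          have h0 : 0 ≤ Y β ω := hY0 β hβ ω
          have h1 : Y β ω ≤ 2*(T ω + C ω) + β := by
            have := hYub_pt β hβ ω
            linarith [hT0 ω]
          nlinarith [sq_nonneg (2*(T ω + C ω) - β)]
      have h8 : Integrable (fun ω => 8*(T ω + C ω)^2) μ := hsq.const_mul 8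
      rwa [integral_add h8 (integrable_const _), integral_const_mul,
        integral_const, probReal_univ, one_smul] at h1
    have hYlb : EC + β ≤ ∫ ω, Y β ω ∂μ := by
      have h1 : ∫ ω, (C ω + β) ∂μ ≤ ∫ ω, Y β ω ∂μ := by
        apply integral_mono ?_ (hYint β hβ) ?_
        · exact hCint.add (integrable_const β)
        · intro ω
          dsimp only
          rw [hYeq]
          have : β ≤ max (T ω + C ω) β := le_max_right _ _
          linarith
      rwa [integral_add hCint (integrable_const β), integral_const, probReal_univ,
        one_smul] at h1
    have hkey : 4*Q/β < EC := by
      rw [div_lt_iff₀ hβ]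
      rw [div_lt_iff₀ hCpos] at hβQ
      nlinarith
    have hquot : (∫ ω, (Y β ω)^2 ∂μ)/(2*β) ≤ 4*Q/β + β := by
      have heq : (8*Q + 2*β^2)/(2*β) = 4*Q/β + β := by
        field_simp; ring
      rw [← heq]
      gcongr
    rw [hF]
    linarith
  -- existence and uniqueness
  obtain ⟨ε, hε, hnegβ⟩ := hneg
  obtain ⟨M, hMβ⟩ := hposF
  set β₁ : ℝ := ε/2 with hβ₁def
  have hβ₁pos : 0 < β₁ := by positivity
  have hFβ₁ : F β₁ < 0 := hnegβ β₁ hβ₁pos (by rw [hβ₁def]; linarith)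
  set β₂ : ℝ := max M β₁ + 1 with hβ₂def
  have hβ₂M : M < β₂ := by
    have := le_max_left M β₁
    rw [hβ₂def]; linarith
  have hFβ₂ : 0 < F β₂ := hMβ β₂ hβ₂M
  have hβ₁₂ : β₁ < β₂ := by
    have := le_max_right M β₁
    rw [hβ₂def]; linarith
  have hsub : Set.Icc β₁ β₂ ⊆ Set.Ioi 0 := fun x hx => lt_of_lt_of_le hβ₁pos hx.1
  have hIVT := intermediate_value_Icc hβ₁₂.le (hcont.mono hsub)
  have h0mem : (0:ℝ) ∈ Set.Icc (F β₁) (F β₂) := ⟨hFβ₁.le, hFβ₂.le⟩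
  obtain ⟨βs, hβsmem, hFβs⟩ := hIVT h0mem
  have hβspos : 0 < βs := lt_of_lt_of_le hβ₁pos hβsmem.1
  refine ⟨hcont, hmono, ⟨ε, hε, hnegβ⟩, ⟨M, hMβ⟩, βs, ⟨hβspos, hFβs⟩, ?_⟩
  intro y hy
  exact hmono.injOn (Set.mem_Ioi.2 hy.1) (Set.mem_Ioi.2 hβspos) (hy.2.trans hFβs.symm)
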